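/- Let x₁,…,x_N be nonnegative reals, not all zero, with at most k of them nonzero (k ≥ 2). Then ∑ᵢ η(xᵢ) - η(∑ᵢ xᵢ) ≤ log(k)·√(2k/(k-1))·√(∑_{i<j} xᵢxⱼ), where η(t) = -t·log t. -/

import Mathlib

open Real Set

noncomputable def Gfun (p : ℝ) : ℝ := p * Real.log p ^ 2 * (1 - p)⁻¹

noncomputable def Gfun' (p : ℝ) : ℝ :=
  (Real.log p ^ 2 + 2 * Real.log p) * (1 - p)⁻¹ + p * Real.log p ^ 2 * ((1 - p)⁻¹) ^ 2

noncomputable def Gfun'' (p : ℝ) : ℝ :=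
  (2 * Real.log p * p⁻¹ + 2 * p⁻¹) * (1 - p)⁻¹
    + (Real.log p ^ 2 + 2 * Real.log p) * ((1 - p)⁻¹) ^ 2 * 2
    + p * Real.log p ^ 2 * ((1 - p)⁻¹) ^ 3 * 2

lemma hasDerivAt_Gfun {p : ℝ} (hp : p ∈ Ioo (0:ℝ) 1) : HasDerivAt Gfun (Gfun' p) p := by
  have hp0 : p ≠ 0 := ne_of_gt hp.1
  have h1p : (1:ℝ) - p ≠ 0 := by have := hp.2; intro h; nlinarith [hp.2]
  have hlog : HasDerivAt Real.log p⁻¹ p := Real.hasDerivAt_log hp0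
  have hsq : HasDerivAt (fun q => Real.log q ^ 2) (2 * Real.log p * p⁻¹) p := by
    simpa [Pi.pow_def] using hlog.pow 2
  have h1 : HasDerivAt (fun q => q * Real.log q ^ 2)
      (1 * Real.log p ^ 2 + p * (2 * Real.log p * p⁻¹)) p := (hasDerivAt_id p).mul hsq
  have hlin : HasDerivAt (fun q : ℝ => 1 - q) (-1) p := by
    simpa [Pi.sub_def] using (hasDerivAt_const p (1:ℝ)).sub (hasDerivAt_id p)
  have hinv : HasDerivAt (fun q : ℝ => (1 - q)⁻¹) (((1 - p)⁻¹) ^ 2) p := by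
    have := hlin.fun_inv h1p
    refine HasDerivAt.congr_deriv this ?_
    field_simp
  have := h1.fun_mul hinv
  refine HasDerivAt.congr_deriv this ?_
  unfold Gfun'
  field_simp

lemma hasDerivAt_Gfun' {p : ℝ} (hp : p ∈ Ioo (0:ℝ) 1) : HasDerivAt Gfun' (Gfun'' p) p := by
  have hp0 : p ≠ 0 := ne_of_gt hp.1
  have h1p : (1:ℝ) - p ≠ 0 := by intro h; nlinarith [hp.2]
  have hlog : HasDerivAt Real.log p⁻¹ p := Real.hasDerivAt_log hp0
  have hsq : HasDerivAt (fun q => Real.log q ^ 2) (2 * Real.log p * p⁻¹) p := by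
    simpa [Pi.pow_def] using hlog.pow 2
  have hlin : HasDerivAt (fun q : ℝ => 1 - q) (-1) p := by
    simpa [Pi.sub_def] using (hasDerivAt_const p (1:ℝ)).sub (hasDerivAt_id p)
  have hinv : HasDerivAt (fun q : ℝ => (1 - q)⁻¹) (((1 - p)⁻¹) ^ 2) p := by
    have := hlin.fun_inv h1p
    refine HasDerivAt.congr_deriv this ?_
    field_simp
  have hinv2 : HasDerivAt (fun q : ℝ => ((1 - q)⁻¹) ^ 2)
      (2 * (1 - p)⁻¹ * ((1 - p)⁻¹) ^ 2) p := by
    simpa [Pi.pow_def] using hinv.pow 2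
  have hA : HasDerivAt (fun q => Real.log q ^ 2 + 2 * Real.log q)
      (2 * Real.log p * p⁻¹ + 2 * p⁻¹) p := by
    simpa [mul_comm, Pi.add_def] using hsq.add (hlog.const_mul 2)
  have h1 : HasDerivAt (fun q => q * Real.log q ^ 2)
      (1 * Real.log p ^ 2 + p * (2 * Real.log p * p⁻¹)) p := (hasDerivAt_id p).mul hsq
  have := (hA.fun_mul hinv).fun_add (h1.fun_mul hinv2)
  refine HasDerivAt.congr_deriv this ?_
  unfold Gfun''
  field_simp
  ring

lemma Gfun''_nonpos {p : ℝ} (hp : p ∈ Ioo (0:ℝ) 1) : Gfun'' p ≤ 0 := by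
  have hp0 : (0:ℝ) < p := hp.1
  have hp1 : p < 1 := hp.2
  have h1p : (0:ℝ) < 1 - p := by linarith
  have hupper : Real.log p ≤ p - 1 := Real.log_le_sub_one_of_pos hp0
  have hlower : 1 - p⁻¹ ≤ Real.log p := by
    have := Real.log_le_sub_one_of_pos (inv_pos.2 hp0)
    rw [Real.log_inv] at this
    linarith
  have hfact : Gfun'' p =
      (2 * p⁻¹ * ((1 - p)⁻¹) ^ 3) * ((Real.log p + (1 - p)) * (p * Real.log p + (1 - p))) := by
    unfold Gfun''
    field_simp
    ring
  rw [hfact]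
  have h1 : Real.log p + (1 - p) ≤ 0 := by linarith
  have h2 : 0 ≤ p * Real.log p + (1 - p) := by
    have : p * (1 - p⁻¹) ≤ p * Real.log p := by
      exact mul_le_mul_of_nonneg_left hlower (le_of_lt hp0)
    have hpp : p * (1 - p⁻¹) = p - 1 := by field_simp
    nlinarith
  have hc : 0 ≤ 2 * p⁻¹ * ((1 - p)⁻¹) ^ 3 := by positivity
  exact mul_nonpos_of_nonneg_of_nonpos hc (mul_nonpos_of_nonpos_of_nonneg h1 h2)

lemma Gfun'_anti : AntitoneOn Gfun' (Ioo (0:ℝ) 1) := by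
  have hder : ∀ p ∈ interior (Ioo (0:ℝ) 1), deriv Gfun' p ≤ 0 := by
    intro p hp
    rw [interior_Ioo] at hp
    rw [(hasDerivAt_Gfun' hp).deriv]
    exact Gfun''_nonpos hp
  refine antitoneOn_of_deriv_nonpos (convex_Ioo 0 1) ?_ ?_ hder
  · intro p hp
    exact (hasDerivAt_Gfun' hp).continuousAt.continuousWithinAt
  · intro p hp
    rw [interior_Ioo] at hp
    exact (hasDerivAt_Gfun' hp).differentiableAt.differentiableWithinAt

lemma Gfun_tangent {q p : ℝ} (hq : q ∈ Ioo (0:ℝ) 1) (hp : p ∈ Ioo (0:ℝ) 1) :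
    Gfun p ≤ Gfun q + Gfun' q * (p - q) := by
  rcases lt_trichotomy p q with h | h | h
  · -- p < q
    obtain ⟨c, hc, hslope⟩ := exists_hasDerivAt_eq_slope Gfun Gfun' h
      (fun y hy => (hasDerivAt_Gfun ⟨lt_of_lt_of_le hp.1 hy.1,
        lt_of_le_of_lt hy.2 hq.2⟩).continuousAt.continuousWithinAt)
      (fun y hy => hasDerivAt_Gfun ⟨lt_trans hp.1 hy.1, lt_trans hy.2 hq.2⟩)
    have hcmem : c ∈ Ioo (0:ℝ) 1 := ⟨lt_trans hp.1 hc.1, lt_trans hc.2 hq.2⟩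
    have hmono : Gfun' q ≤ Gfun' c := Gfun'_anti hcmem hq (le_of_lt hc.2)
    rw [hslope] at hmono
    have hqp : 0 < q - p := by linarith
    rw [le_div_iff₀ hqp] at hmono
    nlinarith [hmono]
  · simp [h]
  · -- q < p
    obtain ⟨c, hc, hslope⟩ := exists_hasDerivAt_eq_slope Gfun Gfun' h
      (fun y hy => (hasDerivAt_Gfun ⟨lt_of_lt_of_le hq.1 hy.1,
        lt_of_le_of_lt hy.2 hp.2⟩).continuousAt.continuousWithinAt)
      (fun y hy => hasDerivAt_Gfun ⟨lt_trans hq.1 hy.1, lt_trans hy.2 hp.2⟩)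
    have hcmem : c ∈ Ioo (0:ℝ) 1 := ⟨lt_trans hq.1 hc.1, lt_trans hc.2 hp.2⟩
    have hmono : Gfun' c ≤ Gfun' q := Gfun'_anti hq hcmem (le_of_lt hc.1)
    rw [hslope] at hmono
    have hpq : 0 < p - q := by linarith
    rw [div_le_iff₀ hpq] at hmono
    nlinarith [hmono]

lemma sum_Gfun_le {ι : Type*} (S : Finset ι) (p : ι → ℝ) (k : ℕ) (hk : 2 ≤ k)
    (hmem : ∀ i ∈ S, p i ∈ Ioo (0:ℝ) 1) (hsum : ∑ i ∈ S, p i = 1) (hcard : S.card ≤ k) :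
    ∑ i ∈ S, Gfun (p i) ≤ (Real.log k) ^ 2 * (k / ((k:ℝ) - 1)) := by
  set K : ℝ := (k : ℝ) with hKdef
  have hK2 : (2:ℝ) ≤ K := by rw [hKdef]; exact_mod_cast hk
  have hK0 : (0:ℝ) < K := by linarith
  have hKne : K ≠ 0 := ne_of_gt hK0
  have hK1ne : K - 1 ≠ 0 := by intro h; nlinarith
  have hq : K⁻¹ ∈ Ioo (0:ℝ) 1 := ⟨inv_pos.2 hK0, by
    rw [inv_lt_one_iff₀]; right; linarith⟩
  have h1q : (1:ℝ) - K⁻¹ ≠ 0 := by intro h; nlinarith [hq.2]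
  have hlogq : Real.log K⁻¹ = -Real.log K := Real.log_inv K
  have hL0 : 0 ≤ Real.log K := Real.log_nonneg (by linarith)
  have hLle : Real.log K ≤ K - 1 := Real.log_le_sub_one_of_pos hK0
  have hA : 0 ≤ Gfun K⁻¹ - K⁻¹ * Gfun' K⁻¹ := by
    have key : Gfun K⁻¹ - K⁻¹ * Gfun' K⁻¹ =
        (K⁻¹ * Real.log K * (2 * (1 - K⁻¹) - K⁻¹ * Real.log K)) * ((1 - K⁻¹)⁻¹) ^ 2 := by
      unfold Gfun Gfun'
      rw [hlogq]
      field_simp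
      ring
    rw [key]
    have h2 : 0 ≤ 2 * (1 - K⁻¹) - K⁻¹ * Real.log K := by
      have e1 : 2 * (1 - K⁻¹) = K⁻¹ * (2 * (K - 1)) := by field_simp
      have e2 : K⁻¹ * Real.log K ≤ K⁻¹ * (2 * (K - 1)) :=
        mul_le_mul_of_nonneg_left (by linarith) (le_of_lt (inv_pos.2 hK0))
      linarith
    have h3 : 0 ≤ K⁻¹ * Real.log K := mul_nonneg (le_of_lt (inv_pos.2 hK0)) hL0
    exact mul_nonneg (mul_nonneg h3 h2) (sq_nonneg _)
  calc ∑ i ∈ S, Gfun (p i)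
      ≤ ∑ i ∈ S, (Gfun K⁻¹ + Gfun' K⁻¹ * (p i - K⁻¹)) :=
        Finset.sum_le_sum (fun i hi => Gfun_tangent hq (hmem i hi))
    _ = (S.card : ℝ) * (Gfun K⁻¹ - K⁻¹ * Gfun' K⁻¹) + Gfun' K⁻¹ := by
        rw [Finset.sum_add_distrib, Finset.sum_const, nsmul_eq_mul, ← Finset.mul_sum,
          Finset.sum_sub_distrib, hsum, Finset.sum_const, nsmul_eq_mul]
        ring
    _ ≤ K * (Gfun K⁻¹ - K⁻¹ * Gfun' K⁻¹) + Gfun' K⁻¹ := by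
        have hcard' : (S.card : ℝ) ≤ K := by rw [hKdef]; exact_mod_cast hcard
        nlinarith [hA]
    _ = (Real.log K) ^ 2 * (K / (K - 1)) := by
        unfold Gfun Gfun'
        rw [hlogq]
        field_simp
        ring

lemma sq_sum_identity (N : ℕ) (x : Fin N → ℝ) :
    (∑ i, x i) ^ 2 = (∑ i, x i ^ 2) +
      2 * ∑ p ∈ Finset.univ.filter (fun p : Fin N × Fin N => p.1 < p.2), x p.1 * x p.2 := by
  classical
  have htot : (∑ i, x i) ^ 2 = ∑ p : Fin N × Fin N, x p.1 * x p.2 := by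
    rw [sq, Finset.sum_mul_sum, ← Finset.univ_product_univ]
    exact (Finset.sum_product' Finset.univ Finset.univ (fun i j => x i * x j)).symm
  have h1 := Finset.sum_filter_add_sum_filter_not Finset.univ
    (fun p : Fin N × Fin N => p.1 < p.2) (fun p => x p.1 * x p.2)
  have h2 := Finset.sum_filter_add_sum_filter_not
    (Finset.univ.filter (fun p : Fin N × Fin N => ¬ p.1 < p.2))
    (fun p => p.2 < p.1) (fun p => x p.1 * x p.2)
  have e1 : (Finset.univ.filter (fun p : Fin N × Fin N => ¬ p.1 < p.2)).filter
      (fun p => p.2 < p.1) = Finset.univ.filter (fun p : Fin N × Fin N => p.2 < p.1) := by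
    ext p
    simp only [Finset.mem_filter, Finset.mem_univ, true_and]
    exact ⟨fun h => h.2, fun h => ⟨asymm h, h⟩⟩
  have e2 : (Finset.univ.filter (fun p : Fin N × Fin N => ¬ p.1 < p.2)).filter
      (fun p => ¬ p.2 < p.1) = Finset.univ.filter (fun p : Fin N × Fin N => p.1 = p.2) := by
    ext p
    simp only [Finset.mem_filter, Finset.mem_univ, true_and]
    constructor
    · exact fun h => le_antisymm (not_lt.1 h.2) (not_lt.1 h.1)
    · exact fun h => ⟨by simp [h], by simp [h]⟩
  have hswap : ∑ p ∈ Finset.univ.filter (fun p : Fin N × Fin N => p.2 < p.1), x p.1 * x p.2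
      = ∑ p ∈ Finset.univ.filter (fun p : Fin N × Fin N => p.1 < p.2), x p.1 * x p.2 := by
    apply Finset.sum_nbij' (fun p => (p.2, p.1)) (fun p => (p.2, p.1)) <;>
      simp [mul_comm]
  have hdiag : ∑ p ∈ Finset.univ.filter (fun p : Fin N × Fin N => p.1 = p.2), x p.1 * x p.2
      = ∑ i, x i ^ 2 := by
    apply Finset.sum_nbij' (fun p : Fin N × Fin N => p.1) (fun i => (i, i)) <;>
      simp +contextual [sq]
  rw [e1, e2] at h2
  rw [htot, ← h1, ← h2, hswap, hdiag]
  ring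

theorem entropy_le_ck_sqrt_e2_rank (N k : ℕ) (hk : 2 ≤ k) (x : Fin N → ℝ)
    (hx : ∀ i, 0 ≤ x i) (hne : ∃ i, x i ≠ 0)
    (hrank : (Finset.univ.filter (fun i => x i ≠ 0)).card ≤ k) :
    (∑ i, (-x i * Real.log (x i))) - (-(∑ i, x i) * Real.log (∑ i, x i)) ≤
      Real.log k * Real.sqrt (2 * k / (k - 1)) *
        Real.sqrt (∑ p ∈ Finset.univ.filter (fun p : Fin N × Fin N => p.1 < p.2),
          x p.1 * x p.2) := by
  classical
  set S : Finset (Fin N) := Finset.univ.filter (fun i => x i ≠ 0) with hSdef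
  set s : ℝ := ∑ i, x i with hsdef
  set E : ℝ := ∑ p ∈ Finset.univ.filter (fun p : Fin N × Fin N => p.1 < p.2),
      x p.1 * x p.2 with hEdef
  obtain ⟨j, hj⟩ := hne
  have hxj : 0 < x j := lt_of_le_of_ne (hx j) (Ne.symm hj)
  have hs_pos : 0 < s :=
    lt_of_lt_of_le hxj (Finset.single_le_sum (fun i _ => hx i) (Finset.mem_univ j))
  have hsne : s ≠ 0 := ne_of_gt hs_pos
  have hE0 : 0 ≤ E := Finset.sum_nonneg (fun p _ => mul_nonneg (hx _) (hx _))
  have hSx : ∀ i ∈ S, x i ≠ 0 := fun i hi => (Finset.mem_filter.1 hi).2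
  have hSxpos : ∀ i ∈ S, 0 < x i := fun i hi => lt_of_le_of_ne (hx i) (Ne.symm (hSx i hi))
  have hsS : ∑ i ∈ S, x i = s := Finset.sum_filter_ne_zero Finset.univ
  have hjS : j ∈ S := Finset.mem_filter.2 ⟨Finset.mem_univ j, hj⟩
  -- rewrite LHS
  have hL : (∑ i, (-x i * Real.log (x i))) - (-s * Real.log s)
      = ∑ i ∈ S, x i * Real.log (s / x i) := by
    have h1 : ∑ i ∈ S, (-x i * Real.log (x i)) = ∑ i, (-x i * Real.log (x i)) :=
      Finset.sum_filter_of_ne (fun i _ h => by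
        intro hxi; apply h; rw [hxi]; simp)
    have h2 : -s * Real.log s = -∑ i ∈ S, (x i * Real.log s) := by
      rw [← Finset.sum_mul, hsS]; ring
    rw [← h1, h2, sub_neg_eq_add, ← Finset.sum_add_distrib]
    refine Finset.sum_congr rfl (fun i hi => ?_)
    rw [Real.log_div hsne (hSx i hi)]
    ring
  -- RHS nonneg pieces
  have hk1 : (1:ℝ) ≤ (k:ℝ) := by
    have : (2:ℝ) ≤ (k:ℝ) := by exact_mod_cast hk
    linarith
  have hLk0 : 0 ≤ Real.log k := Real.log_nonneg hk1
  have hfrac0 : 0 ≤ 2 * (k:ℝ) / ((k:ℝ) - 1) := by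
    have h2k : (2:ℝ) ≤ (k:ℝ) := by exact_mod_cast hk
    apply div_nonneg <;> linarith
  rw [hL]
  rcases Nat.lt_or_ge S.card 2 with hm | hm
  · -- at most one nonzero entry
    have hcard1 : ∀ a ∈ S, ∀ b ∈ S, a = b := Finset.card_le_one.1 (by omega)
    have hSeq : S = {j} := by
      apply Finset.eq_singleton_iff_unique_mem.2
      exact ⟨hjS, fun b hb => hcard1 b hb j hjS⟩
    have hxjs : x j = s := by
      rw [← hsS, hSeq, Finset.sum_singleton]
    have : ∑ i ∈ S, x i * Real.log (s / x i) = 0 := by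
      rw [hSeq, Finset.sum_singleton, hxjs, div_self hsne, Real.log_one, mul_zero]
    rw [this]
    exact mul_nonneg (mul_nonneg hLk0 (Real.sqrt_nonneg _)) (Real.sqrt_nonneg _)
  · -- main case : at least two nonzero entries
    have hlt : ∀ i ∈ S, x i < s := by
      intro i hi
      have h1S : 1 < S.card := by omega
      obtain ⟨b, hb, hbi⟩ := Finset.exists_mem_ne h1S i
      have hpair : x i + x b ≤ s := by
        rw [hsdef]
        have : ∑ a ∈ ({i, b} : Finset (Fin N)), x a ≤ ∑ a, x a :=
          Finset.sum_le_sum_of_subset_of_nonneg (Finset.subset_univ _)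
            (fun a _ _ => hx a)
        rwa [Finset.sum_pair (Ne.symm hbi)] at this
      have := hSxpos b hb
      linarith
    have hmem : ∀ i ∈ S, x i / s ∈ Ioo (0:ℝ) 1 := fun i hi =>
      ⟨div_pos (hSxpos i hi) hs_pos, (div_lt_one hs_pos).2 (hlt i hi)⟩
    set f : Fin N → ℝ := fun i => Real.sqrt (x i * (s - x i)) with hfdef
    set g : Fin N → ℝ := fun i => Real.sqrt (x i / (s - x i)) * Real.log (s / x i) with hgdef
    have hCS := Finset.sum_mul_sq_le_sq_mul_sq S f g
    have hfg : ∀ i ∈ S, f i * g i = x i * Real.log (s / x i) := by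
      intro i hi
      have hsx : 0 < s - x i := by have := hlt i hi; linarith
      rw [hfdef, hgdef]
      rw [show Real.sqrt (x i * (s - x i)) * (Real.sqrt (x i / (s - x i)) * Real.log (s / x i))
        = (Real.sqrt (x i * (s - x i)) * Real.sqrt (x i / (s - x i))) * Real.log (s / x i) by ring]
      rw [← Real.sqrt_mul (mul_nonneg (hx i) (le_of_lt hsx))]
      congr 1
      rw [show x i * (s - x i) * (x i / (s - x i)) = x i ^ 2 by field_simp]
      exact Real.sqrt_sq (hx i)
    have hf2 : ∀ i ∈ S, f i ^ 2 = x i * (s - x i) := by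
      intro i hi
      have hsx : 0 < s - x i := by have := hlt i hi; linarith
      exact Real.sq_sqrt (mul_nonneg (hx i) (le_of_lt hsx))
    have hg2 : ∀ i ∈ S, g i ^ 2 = Gfun (x i / s) := by
      intro i hi
      have hsx : 0 < s - x i := by have := hlt i hi; linarith
      have hxi := hSxpos i hi
      rw [hgdef, mul_pow, Real.sq_sqrt (div_nonneg (hx i) (le_of_lt hsx))]
      have hlogeq : Real.log (x i / s) = -Real.log (s / x i) := by
        rw [← Real.log_inv, inv_div]
      unfold Gfun
      rw [hlogeq, neg_pow]
      rw [show (-1:ℝ)^2 * Real.log (s / x i) ^ 2 = Real.log (s / x i) ^ 2 by ring]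
      have h1 : (1 : ℝ) - x i / s = (s - x i) / s := by field_simp
      rw [h1]
      field_simp
    have hsum_fg : ∑ i ∈ S, f i * g i = ∑ i ∈ S, x i * Real.log (s / x i) :=
      Finset.sum_congr rfl hfg
    have hsum_f2 : ∑ i ∈ S, f i ^ 2 = 2 * E := by
      rw [Finset.sum_congr rfl hf2]
      have hext : ∑ i ∈ S, x i * (s - x i) = ∑ i, x i * (s - x i) :=
        Finset.sum_filter_of_ne (fun i _ h => by
          intro hxi; apply h; rw [hxi]; simp)
      rw [hext]
      have hid := sq_sum_identity N x
      rw [← hsdef, ← hEdef] at hid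
      have hexp : ∑ i, x i * (s - x i) = (∑ i, x i) * s - ∑ i, x i ^ 2 := by
        rw [show (fun i => x i * (s - x i)) = (fun i => x i * s - x i ^ 2) by
          funext i; ring]
        rw [Finset.sum_sub_distrib, ← Finset.sum_mul]
      rw [hexp, ← hsdef]
      nlinarith [hid]
    have hsum_g2 : ∑ i ∈ S, g i ^ 2 ≤ Real.log k ^ 2 * ((k:ℝ) / ((k:ℝ) - 1)) := by
      rw [Finset.sum_congr rfl hg2]
      refine sum_Gfun_le S (fun i => x i / s) k hk hmem ?_ hrank
      rw [← Finset.sum_div, hsS, div_self hsne]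
    have hCS' : (∑ i ∈ S, x i * Real.log (s / x i)) ^ 2
        ≤ (2 * E) * (Real.log k ^ 2 * ((k:ℝ) / ((k:ℝ) - 1))) := by
      rw [← hsum_fg]
      refine le_trans hCS ?_
      rw [hsum_f2]
      exact mul_le_mul_of_nonneg_left hsum_g2 (by linarith [hE0])
    have hLHS0 : 0 ≤ ∑ i ∈ S, x i * Real.log (s / x i) :=
      Finset.sum_nonneg fun i hi => mul_nonneg (hx i)
        (Real.log_nonneg ((one_le_div (hSxpos i hi)).2 (le_of_lt (hlt i hi))))
    calc ∑ i ∈ S, x i * Real.log (s / x i)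
        = Real.sqrt ((∑ i ∈ S, x i * Real.log (s / x i)) ^ 2) := (Real.sqrt_sq hLHS0).symm
      _ ≤ Real.sqrt ((2 * E) * (Real.log k ^ 2 * ((k:ℝ) / ((k:ℝ) - 1)))) :=
          Real.sqrt_le_sqrt hCS'
      _ = Real.log k * Real.sqrt (2 * (k:ℝ) / ((k:ℝ) - 1)) * Real.sqrt E := by
          rw [show (2 * E) * (Real.log k ^ 2 * ((k:ℝ) / ((k:ℝ) - 1)))
            = (Real.log k) ^ 2 * ((2 * (k:ℝ) / ((k:ℝ) - 1)) * E) by ring]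
          rw [Real.sqrt_mul (sq_nonneg _), Real.sqrt_sq hLk0, Real.sqrt_mul hfrac0,
            ← mul_assoc]
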